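/- In two dimensions, interpolation followed by the vector curl equals the mimetic projection of the vector curl: for every continuously differentiable function f on [−1,1]², writing curl_v(f) = (∂f/∂η, −∂f/∂ξ) and I²f(ξ,η) = ∑_{i,j=0}^N f(ξ_i, ξ_j) l_i(ξ) l_j(η), one has curl_v(I²f) = p³(curl_v f), where the componentwise mixed projection p³ is given by p³₁(g)(ξ,η) = ∑_{i=0}^N ∑_{j=1}^N (∫_{ξ_{j−1}}^{ξ_j} g(ξ_i, s) ds) l_i(ξ) h_j(η) and p³₂(g)(ξ,η) = ∑_{i=1}^N ∑_{j=0}^N (∫_{ξ_{i−1}}^{ξ_i} g(s, ξ_j) ds) h_i(ξ) l_j(η). -/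

import Mathlib

open Polynomial MeasureTheory Finset

lemma abel_aux (c d : ℕ → ℝ) (n : ℕ) :
    ∑ b ∈ Finset.range n, (c (b + 1) - c b) * (∑ j ∈ Finset.range (b + 1), d j)
      = c n * (∑ j ∈ Finset.range n, d j) - ∑ b ∈ Finset.range n, c b * d b := by
  induction n with
  | zero => simp
  | succ n ih =>
      rw [Finset.sum_range_succ, ih, Finset.sum_range_succ d,
        Finset.sum_range_succ (fun b => c b * d b)]
      ring

lemma abel_key (N : ℕ) (c d : ℕ → ℝ) (h0 : ∑ j ∈ Finset.range (N + 1), d j = 0) :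
    ∑ b ∈ Finset.range (N + 1), c b * d b
      = ∑ b ∈ Finset.range N, (c (b + 1) - c b) * (-(∑ j ∈ Finset.range (b + 1), d j)) := by
  have h1 : ∑ b ∈ Finset.range N, (c (b + 1) - c b) * (-(∑ j ∈ Finset.range (b + 1), d j))
      = -(c N * (∑ j ∈ Finset.range N, d j) - ∑ b ∈ Finset.range N, c b * d b) := by
    rw [← abel_aux c d N, ← Finset.sum_neg_distrib]
    exact Finset.sum_congr rfl fun b _ => by ring
  rw [h1, Finset.sum_range_succ (fun b => c b * d b)]
  have h2 : d N = -∑ j ∈ Finset.range N, d j := by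
    have := h0; rw [Finset.sum_range_succ] at this; linarith
  rw [h2]; ring

lemma ite_sum_range {M : Type*} [AddCommMonoid M] (n m : ℕ) (hm : m ≤ n) (d : ℕ → M) :
    ∑ k ∈ Finset.range n, (if k < m then d k else 0) = ∑ k ∈ Finset.range m, d k := by
  rw [← Finset.sum_subset (Finset.range_subset_range.mpr hm)
    (fun k _ hk => if_neg (by simpa using Finset.mem_range.not.mp hk))]
  exact Finset.sum_congr rfl fun k hk => if_pos (Finset.mem_range.mp hk)

lemma scalar_id (N : ℕ) (c d : Fin (N + 1) → ℝ) (e : Fin N → ℝ)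
    (hd0 : ∑ j : Fin (N + 1), d j = 0)
    (he : ∀ b : Fin N, e b = -∑ j : Fin (N + 1), (if (j : ℕ) < (b : ℕ) + 1 then d j else 0)) :
    ∑ b : Fin (N + 1), c b * d b = ∑ b : Fin N, (c b.succ - c b.castSucc) * e b := by
  classical
  set C : ℕ → ℝ := fun k => if hk : k < N + 1 then c ⟨k, hk⟩ else 0 with hC
  set D : ℕ → ℝ := fun k => if hk : k < N + 1 then d ⟨k, hk⟩ else 0 with hD
  have hCk : ∀ b : Fin (N + 1), C (b : ℕ) = c b := fun b => by
    simp [hC, b.isLt]; intro hb; exact absurd b.isLt (by omega)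
  have hDk : ∀ b : Fin (N + 1), D (b : ℕ) = d b := fun b => by
    simp [hD, b.isLt]; intro hb; exact absurd b.isLt (by omega)
  have hTD : ∀ m : ℕ, m ≤ N + 1 →
      (∑ j : Fin (N + 1), (if (j : ℕ) < m then d j else 0)) = ∑ k ∈ Finset.range m, D k := by
    intro m hm
    rw [← ite_sum_range (N + 1) m hm D,
      ← Fin.sum_univ_eq_sum_range (fun k => if k < m then D k else 0) (N + 1)]
    exact Finset.sum_congr rfl fun j _ => by rw [hDk]
  have hLHS : ∑ b : Fin (N + 1), c b * d b = ∑ k ∈ Finset.range (N + 1), C k * D k := by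
    rw [← Fin.sum_univ_eq_sum_range (fun k => C k * D k) (N + 1)]
    exact Finset.sum_congr rfl fun b _ => by rw [hCk, hDk]
  have hD0' : ∑ k ∈ Finset.range (N + 1), D k = 0 := by
    rw [← Fin.sum_univ_eq_sum_range D (N + 1), ← hd0]
    exact Finset.sum_congr rfl fun b _ => hDk b
  rw [hLHS, abel_key N C D hD0',
    ← Fin.sum_univ_eq_sum_range
      (fun b => (C (b + 1) - C b) * (-(∑ j ∈ Finset.range (b + 1), D j))) N]
  apply Finset.sum_congr rfl
  intro b _
  have h1 : C ((b : ℕ) + 1) = c b.succ := by rw [← hCk b.succ, Fin.val_succ]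
  have h2 : C (b : ℕ) = c b.castSucc := by rw [← hCk b.castSucc, Fin.coe_castSucc]
  rw [he b, hTD ((b : ℕ) + 1) (by omega), h1, h2]

lemma ftc_aux (g : ℝ → ℝ) (hg : ContDiffOn ℝ 1 g (Set.Icc (-1 : ℝ) 1))
    {a b : ℝ} (ha : a ∈ Set.Icc (-1 : ℝ) 1) (hb : b ∈ Set.Icc (-1 : ℝ) 1) (hab : a ≤ b) :
    ∫ s in a..b, derivWithin g (Set.Icc (-1 : ℝ) 1) s = g b - g a := by
  have hU : UniqueDiffOn ℝ (Set.Icc (-1 : ℝ) 1) := uniqueDiffOn_Icc (by norm_num)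
  have hsub : Set.Icc a b ⊆ Set.Icc (-1 : ℝ) 1 := Set.Icc_subset_Icc ha.1 hb.2
  have hCd : ContinuousOn (fun s => derivWithin g (Set.Icc (-1 : ℝ) 1) s) (Set.Icc (-1 : ℝ) 1) :=
    hg.continuousOn_derivWithin hU le_rfl
  apply intervalIntegral.integral_eq_sub_of_hasDeriv_right_of_le hab
    (hg.continuousOn.mono hsub)
  · intro t ht
    have htI : Set.Icc (-1 : ℝ) 1 ∈ nhds t :=
      Icc_mem_nhds (lt_of_le_of_lt ha.1 ht.1) (lt_of_lt_of_le ht.2 hb.2)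
    have hd := ((hg.differentiableOn one_ne_zero) t (hsub ⟨ht.1.le, ht.2.le⟩)).hasDerivWithinAt
    exact (hd.hasDerivAt htI).hasDerivWithinAt
  · exact (hCd.mono (by rwa [Set.uIcc_of_le hab])).intervalIntegrable

/-- In two dimensions, interpolation followed by the vector curl
`curl_v(f) = (∂f/∂η, -∂f/∂ξ)` equals the mimetic projection of the vector curl:
for every continuously differentiable `f` on `[-1,1]²` and `(ξ,η) ∈ [-1,1]²`,
`curl_v(I²f) = p³(curl_v f)`, where
`p³₁(g) = ∑_{i=0}^N ∑_{j=1}^N (∫_{ξ_{j-1}}^{ξ_j} g(ξᵢ,s) ds) lᵢ(ξ) hⱼ(η)` and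
`p³₂(g) = ∑_{i=1}^N ∑_{j=0}^N (∫_{ξ_{i-1}}^{ξ_i} g(s,ξⱼ) ds) hᵢ(ξ) lⱼ(η)`. -/
theorem curl_v_interpolant_eq_p3_curl_v
    (N : ℕ) (hN : 1 ≤ N) (ξ : Fin (N + 1) → ℝ)
    (hmono : StrictMono ξ) (hfirst : ξ 0 = -1) (hlast : ξ (Fin.last N) = 1)
    (l : Fin (N + 1) → Polynomial ℝ)
    (hdeg : ∀ i, (l i).natDegree ≤ N)
    (hlag : ∀ i j, (l i).eval (ξ j) = if i = j then 1 else 0)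
    (h : Fin N → Polynomial ℝ)
    (hdef : ∀ i : Fin N,
      h i = -∑ j : Fin (N + 1), if (j : ℕ) < (i : ℕ) + 1 then derivative (l j) else 0)
    (f : ℝ × ℝ → ℝ)
    (hf : ContDiffOn ℝ 1 f (Set.Icc (-1 : ℝ) 1 ×ˢ Set.Icc (-1 : ℝ) 1)) :
    ∀ x ∈ Set.Icc (-1 : ℝ) 1, ∀ y ∈ Set.Icc (-1 : ℝ) 1,
      (deriv (fun t => ∑ a : Fin (N + 1), ∑ b : Fin (N + 1),
          f (ξ a, ξ b) * (l a).eval x * (l b).eval t) y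
        = ∑ a : Fin (N + 1), ∑ b : Fin N,
            (∫ s in (ξ b.castSucc)..(ξ b.succ),
                derivWithin (fun t => f (ξ a, t)) (Set.Icc (-1 : ℝ) 1) s)
              * (l a).eval x * (h b).eval y) ∧
      (-(deriv (fun s => ∑ a : Fin (N + 1), ∑ b : Fin (N + 1),
          f (ξ a, ξ b) * (l a).eval s * (l b).eval y) x)
        = ∑ a : Fin N, ∑ b : Fin (N + 1),
            (∫ s in (ξ a.castSucc)..(ξ a.succ),
                -(derivWithin (fun u => f (u, ξ b)) (Set.Icc (-1 : ℝ) 1) s))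
              * (h a).eval x * (l b).eval y) := by
  classical
  have hmem : ∀ i : Fin (N + 1), ξ i ∈ Set.Icc (-1 : ℝ) 1 := fun i =>
    ⟨hfirst ▸ hmono.monotone (Fin.zero_le i), hlast ▸ hmono.monotone (Fin.le_last i)⟩
  have hsum1 : (∑ j : Fin (N + 1), l j) = 1 := by
    have hz : (∑ j : Fin (N + 1), l j) - 1 = 0 := by
      apply Polynomial.eq_zero_of_natDegree_lt_card_of_eval_eq_zero _ hmono.injective
      · intro i
        simp [Polynomial.eval_finset_sum, hlag, Finset.sum_ite_eq']
      · have h1 : ((∑ j : Fin (N + 1), l j) - 1).natDegree ≤ N := by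
          refine le_trans (Polynomial.natDegree_sub_le _ _) ?_
          simp only [max_le_iff]
          exact ⟨Polynomial.natDegree_sum_le_of_forall_le _ _ fun i _ => hdeg i, by simp⟩
        have h2 : Fintype.card (Fin (N + 1)) = N + 1 := Fintype.card_fin _
        omega
    exact sub_eq_zero.mp hz
  have hdsum : (∑ j : Fin (N + 1), derivative (l j)) = 0 := by
    have := congrArg derivative hsum1
    simpa [map_sum] using this
  have hdeval : ∀ t : ℝ, ∑ j : Fin (N + 1), (derivative (l j)).eval t = 0 := by
    intro t
    rw [← Polynomial.eval_finset_sum, hdsum, Polynomial.eval_zero]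
  have hg1 : ∀ a : Fin (N + 1),
      ContDiffOn ℝ 1 (fun t => f (ξ a, t)) (Set.Icc (-1 : ℝ) 1) := fun a =>
    hf.comp ((contDiff_const.prodMk contDiff_id).contDiffOn) (fun t ht => ⟨hmem a, ht⟩)
  have hg2 : ∀ b : Fin (N + 1),
      ContDiffOn ℝ 1 (fun u => f (u, ξ b)) (Set.Icc (-1 : ℝ) 1) := fun b =>
    hf.comp ((contDiff_id.prodMk contDiff_const).contDiffOn) (fun t ht => ⟨ht, hmem b⟩)
  have hheval : ∀ (t : ℝ) (b : Fin N),
      (h b).eval t = -∑ j : Fin (N + 1),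
        (if (j : ℕ) < (b : ℕ) + 1 then (derivative (l j)).eval t else 0) := by
    intro t b
    rw [hdef b, Polynomial.eval_neg, Polynomial.eval_finset_sum]
    refine congrArg Neg.neg (Finset.sum_congr rfl fun j _ => ?_)
    split <;> simp
  intro x hx y hy
  constructor
  · -- first component
    have hfun : (fun t => ∑ a : Fin (N + 1), ∑ b : Fin (N + 1),
        f (ξ a, ξ b) * (l a).eval x * (l b).eval t)
        = fun t => (∑ a : Fin (N + 1), ∑ b : Fin (N + 1),
            Polynomial.C (f (ξ a, ξ b) * (l a).eval x) * l b).eval t := by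
      funext t
      rw [Polynomial.eval_finset_sum]
      refine Finset.sum_congr rfl fun a _ => ?_
      rw [Polynomial.eval_finset_sum]
      exact Finset.sum_congr rfl fun b _ => by simp [mul_assoc]
    have hderiv1 : deriv (fun t => ∑ a : Fin (N + 1), ∑ b : Fin (N + 1),
        f (ξ a, ξ b) * (l a).eval x * (l b).eval t) y
        = ∑ a : Fin (N + 1), ∑ b : Fin (N + 1),
            f (ξ a, ξ b) * (l a).eval x * (derivative (l b)).eval y := by
      rw [hfun, Polynomial.deriv, map_sum, Polynomial.eval_finset_sum]
      refine Finset.sum_congr rfl fun a _ => ?_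
      rw [map_sum, Polynomial.eval_finset_sum]
      refine Finset.sum_congr rfl fun b _ => ?_
      rw [Polynomial.derivative_C_mul]
      simp [mul_assoc]
    rw [hderiv1]
    refine Finset.sum_congr rfl fun a _ => ?_
    calc ∑ b : Fin (N + 1), f (ξ a, ξ b) * (l a).eval x * (derivative (l b)).eval y
        = (∑ b : Fin (N + 1), f (ξ a, ξ b) * (derivative (l b)).eval y) * (l a).eval x := by
          rw [Finset.sum_mul]; exact Finset.sum_congr rfl fun b _ => by ring
      _ = (∑ b : Fin N, (f (ξ a, ξ b.succ) - f (ξ a, ξ b.castSucc)) * (h b).eval y)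
            * (l a).eval x := by
          congr 1
          exact scalar_id N (fun b => f (ξ a, ξ b)) (fun b => (derivative (l b)).eval y)
            (fun b => (h b).eval y) (hdeval y) (fun b => hheval y b)
      _ = ∑ b : Fin N,
            (∫ s in (ξ b.castSucc)..(ξ b.succ),
                derivWithin (fun t => f (ξ a, t)) (Set.Icc (-1 : ℝ) 1) s)
              * (l a).eval x * (h b).eval y := by
          rw [Finset.sum_mul]
          refine Finset.sum_congr rfl fun b _ => ?_
          rw [ftc_aux _ (hg1 a) (hmem _) (hmem _) (hmono (Fin.castSucc_lt_succ : b.castSucc < b.succ)).le]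
          ring
  · -- second component
    have hfun : (fun s => ∑ a : Fin (N + 1), ∑ b : Fin (N + 1),
        f (ξ a, ξ b) * (l a).eval s * (l b).eval y)
        = fun s => (∑ a : Fin (N + 1), ∑ b : Fin (N + 1),
            Polynomial.C (f (ξ a, ξ b) * (l b).eval y) * l a).eval s := by
      funext s
      rw [Polynomial.eval_finset_sum]
      refine Finset.sum_congr rfl fun a _ => ?_
      rw [Polynomial.eval_finset_sum]
      refine Finset.sum_congr rfl fun b _ => ?_
      simp only [Polynomial.eval_mul, Polynomial.eval_C]
      ring
    have hderiv2 : deriv (fun s => ∑ a : Fin (N + 1), ∑ b : Fin (N + 1),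
        f (ξ a, ξ b) * (l a).eval s * (l b).eval y) x
        = ∑ a : Fin (N + 1), ∑ b : Fin (N + 1),
            f (ξ a, ξ b) * (l b).eval y * (derivative (l a)).eval x := by
      rw [hfun, Polynomial.deriv, map_sum, Polynomial.eval_finset_sum]
      refine Finset.sum_congr rfl fun a _ => ?_
      rw [map_sum, Polynomial.eval_finset_sum]
      refine Finset.sum_congr rfl fun b _ => ?_
      rw [Polynomial.derivative_C_mul]
      simp [mul_assoc]
    have main2 : ∑ a : Fin (N + 1), ∑ b : Fin (N + 1),
        f (ξ a, ξ b) * (l b).eval y * (derivative (l a)).eval x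
        = ∑ a : Fin N, ∑ b : Fin (N + 1),
            (f (ξ a.succ, ξ b) - f (ξ a.castSucc, ξ b)) * (h a).eval x * (l b).eval y := by
      rw [Finset.sum_comm]
      conv_rhs => rw [Finset.sum_comm]
      refine Finset.sum_congr rfl fun b _ => ?_
      calc ∑ a : Fin (N + 1), f (ξ a, ξ b) * (l b).eval y * (derivative (l a)).eval x
          = (∑ a : Fin (N + 1), f (ξ a, ξ b) * (derivative (l a)).eval x) * (l b).eval y := by
            rw [Finset.sum_mul]; exact Finset.sum_congr rfl fun a _ => by ring
        _ = (∑ a : Fin N, (f (ξ a.succ, ξ b) - f (ξ a.castSucc, ξ b)) * (h a).eval x)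
              * (l b).eval y := by
            congr 1
            exact scalar_id N (fun a => f (ξ a, ξ b)) (fun a => (derivative (l a)).eval x)
              (fun a => (h a).eval x) (hdeval x) (fun a => hheval x a)
        _ = ∑ a : Fin N,
              (f (ξ a.succ, ξ b) - f (ξ a.castSucc, ξ b)) * (h a).eval x * (l b).eval y := by
            rw [Finset.sum_mul]
    have hR2 : ∑ a : Fin N, ∑ b : Fin (N + 1),
        (∫ s in (ξ a.castSucc)..(ξ a.succ),
            -(derivWithin (fun u => f (u, ξ b)) (Set.Icc (-1 : ℝ) 1) s))
          * (h a).eval x * (l b).eval y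
        = -(∑ a : Fin N, ∑ b : Fin (N + 1),
            (f (ξ a.succ, ξ b) - f (ξ a.castSucc, ξ b)) * (h a).eval x * (l b).eval y) := by
      rw [← Finset.sum_neg_distrib]
      refine Finset.sum_congr rfl fun a _ => ?_
      rw [← Finset.sum_neg_distrib]
      refine Finset.sum_congr rfl fun b _ => ?_
      rw [intervalIntegral.integral_neg,
        ftc_aux _ (hg2 b) (hmem _) (hmem _) (hmono (Fin.castSucc_lt_succ : a.castSucc < a.succ)).le]
      ring
    rw [hderiv2, hR2, main2]
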